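/- There exists a constant C > 0 such that for all b ≥ 1, ∫_{[0,1]²} (log|x - y|)² · b x^{b-1} · b y^{b-1} dx dy ≤ C * (log b + 1)^4. -/

import Mathlib

open MeasureTheory

section Aux
open Real Set


lemma sq_le_four_exp {t : ℝ} (ht : 0 ≤ t) : t ^ 2 ≤ 4 * Real.exp t := by
  have h1 : t/2 + 1 ≤ Real.exp (t/2) := Real.add_one_le_exp (t/2)
  have h2 : Real.exp (t/2) * Real.exp (t/2) = Real.exp t := by
    rw [← Real.exp_add]; ring_nf
  nlinarith [Real.exp_pos (t/2)]

-- log² u ≤ (4/ε²) u^(−ε) for 0 ≤ u ≤ 1, ε > 0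
lemma logsq_le {ε u : ℝ} (hε : 0 < ε) (hu0 : 0 ≤ u) (hu1 : u ≤ 1) :
    (Real.log u) ^ 2 ≤ 4 / ε ^ 2 * u ^ (-ε) := by
  rcases eq_or_lt_of_le hu0 with h | h
  · simp [← h, Real.zero_rpow (neg_ne_zero.2 hε.ne')]
  · have hlog : Real.log u ≤ 0 := Real.log_nonpos hu0 hu1
    set s : ℝ := -Real.log u with hs
    have hs0 : 0 ≤ s := by simp [hs]; linarith
    have hrw : u ^ (-ε) = Real.exp (ε * s) := by
      rw [Real.rpow_def_of_pos h, hs]; ring_nf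
    have key := sq_le_four_exp (mul_nonneg hε.le hs0)
    rw [hrw]
    have hlu : (Real.log u) ^ 2 = s ^ 2 := by rw [hs]; ring
    rw [hlu]
    have hε2 : 0 < ε ^ 2 := by positivity
    rw [div_mul_eq_mul_div, le_div_iff₀ hε2]
    nlinarith


lemma density_integral {b : ℝ} (hb : 1 ≤ b) :
    ∫ y in Set.Icc (0:ℝ) 1, b * y ^ (b - 1) = 1 := by
  have hb0 : (0:ℝ) < b := by linarith
  rw [integral_Icc_eq_integral_Ioc, ← intervalIntegral.integral_of_le (zero_le_one),
    intervalIntegral.integral_const_mul, integral_rpow (Or.inl (by linarith : (-1:ℝ) < b - 1))]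
  rw [Real.one_rpow, Real.zero_rpow (by linarith : b - 1 + 1 ≠ 0)]
  field_simp
  rw [sub_add_cancel, sub_zero, mul_one, div_self hb0.ne']

lemma density_integrableOn {b : ℝ} (hb : 1 ≤ b) :
    IntegrableOn (fun y : ℝ => b * y ^ (b - 1)) (Set.Icc 0 1) volume := by
  have h : IntervalIntegrable (fun y : ℝ => y ^ (b-1)) volume 0 1 :=
    intervalIntegral.intervalIntegrable_rpow' (by linarith)
  rw [intervalIntegrable_iff_integrableOn_Icc_of_le zero_le_one] at h
  exact h.const_mul b

-- rpow with exponent -ε, ε ≤ 1/2, is nonneg everywhere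
lemma rpow_neg_eps_nonneg {ε : ℝ} (hε : 0 < ε) (hε2 : ε ≤ 1/2) (u : ℝ) :
    0 ≤ u ^ (-ε) := by
  rcases lt_trichotomy u 0 with h | h | h
  · rw [Real.rpow_def_of_neg h]
    apply mul_nonneg (Real.exp_pos _).le
    rw [neg_mul]
    rw [Real.cos_neg]
    apply Real.cos_nonneg_of_mem_Icc
    constructor
    · nlinarith [Real.pi_pos]
    · nlinarith [Real.pi_pos]
  · simp [h, Real.zero_rpow (neg_ne_zero.2 hε.ne')]
  · exact (Real.rpow_pos_of_pos h _).le

-- domination: |u|^(-ε) ≤ u^(-ε) + (-u)^(-ε)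
lemma abs_rpow_le {ε : ℝ} (hε : 0 < ε) (hε2 : ε ≤ 1/2) (u : ℝ) :
    |u| ^ (-ε) ≤ u ^ (-ε) + (-u) ^ (-ε) := by
  rcases lt_trichotomy u 0 with h | h | h
  · rw [abs_of_neg h]
    have := rpow_neg_eps_nonneg hε hε2 u
    linarith
  · simp [h, Real.zero_rpow (neg_ne_zero.2 hε.ne')]
  · rw [abs_of_pos h]
    have := rpow_neg_eps_nonneg hε hε2 (-u)
    linarith


lemma near_integral {b ε : ℝ} (hb : 1 ≤ b) (hε : 0 < ε) (hε2 : ε ≤ 1/2)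
    (hbe : b ^ ε ≤ 3) (x : ℝ) :
    ∫ y in (x - 1/b)..(x + 1/b), ((x - y) ^ (-ε) + (y - x) ^ (-ε)) ≤ 24 / b := by
  have hb0 : (0:ℝ) < b := by linarith
  have hrpow : IntervalIntegrable (fun u : ℝ => u ^ (-ε)) volume (-(1/b)) (1/b) :=
    intervalIntegral.intervalIntegrable_rpow' (by linarith)
  have h1 : IntervalIntegrable (fun y : ℝ => (x - y) ^ (-ε)) volume (x - 1/b) (x + 1/b) := by
    have h := (hrpow.comp_sub_left x).symm
    have e1 : x - -(1/b) = x + 1/b := by ring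
    have e2 : x - 1/b = x - 1/b := rfl
    rw [e1] at h
    exact h
  have h2 : IntervalIntegrable (fun y : ℝ => (y - x) ^ (-ε)) volume (x - 1/b) (x + 1/b) := by
    have h := hrpow.comp_sub_right x
    have e1 : -(1/b) + x = x - 1/b := by ring
    have e2 : 1/b + x = x + 1/b := by ring
    rw [e1, e2] at h
    exact h
  rw [intervalIntegral.integral_add h1 h2]
  have e1 : (∫ y in (x - 1/b)..(x + 1/b), (x - y) ^ (-ε)) =
      ∫ u in (-(1/b))..(1/b), u ^ (-ε) := by
    rw [intervalIntegral.integral_comp_sub_left (fun u : ℝ => u ^ (-ε)) x]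
    norm_num
  have e2 : (∫ y in (x - 1/b)..(x + 1/b), (y - x) ^ (-ε)) =
      ∫ u in (-(1/b))..(1/b), u ^ (-ε) := by
    rw [intervalIntegral.integral_comp_sub_right (fun u : ℝ => u ^ (-ε)) x]
    norm_num
  rw [e1, e2]
  have hval : (∫ u in (-(1/b))..(1/b), u ^ (-ε)) =
      ((1/b) ^ (-ε+1) - (-(1/b)) ^ (-ε+1)) / (-ε+1) :=
    integral_rpow (Or.inl (by linarith))
  have habs : |(-(1/b)) ^ (-ε+1)| ≤ (1/b) ^ (-ε+1) := by
    have := Real.abs_rpow_le_abs_rpow (-(1/b)) (-ε+1)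
    simpa [abs_neg, one_div, abs_of_pos (by positivity : (0:ℝ) < b⁻¹)] using this
  have hpow : (1/b) ^ (-ε+1) ≤ 3 / b := by
    rw [Real.rpow_add (by positivity), Real.rpow_one]
    have : (1/b) ^ (-ε) = b ^ ε := by
      rw [one_div, Real.inv_rpow hb0.le, Real.rpow_neg hb0.le, inv_inv]
    rw [this]
    calc b ^ ε * (1/b) ≤ 3 * (1/b) := by
          apply mul_le_mul_of_nonneg_right hbe (by positivity)
      _ = 3 / b := by ring
  rw [hval]
  have hnum : (1/b) ^ (-ε+1) - (-(1/b)) ^ (-ε+1) ≤ 6 / b := by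
    have h3 := neg_le_abs ((-(1/b)) ^ (-ε+1))
    have hr : (6:ℝ)/b = 3/b + 3/b := by ring
    linarith
  have hden : (1:ℝ)/2 ≤ -ε + 1 := by linarith
  have key : ((1/b) ^ (-ε+1) - (-(1/b)) ^ (-ε+1)) / (-ε+1) ≤ 12 / b := by
    rw [div_le_iff₀ (by linarith : (0:ℝ) < -ε + 1)]
    have h12 : (0:ℝ) ≤ 12 / b := by positivity
    have hr : (12:ℝ)/b * (-ε+1) = 6/b + 12/b*(1/2 - ε) := by ring
    have hr2 : (0:ℝ) ≤ 12/b*(1/2 - ε) := by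
      apply mul_nonneg h12; linarith
    linarith
  have hr24 : (24:ℝ)/b = 12/b + 12/b := by ring
  linarith

lemma inner_bound {b : ℝ} (hb : 1 ≤ b) {x : ℝ} (hx : x ∈ Set.Icc (0:ℝ) 1) :
    ∫ y in Set.Icc (0:ℝ) 1, (Real.log |x - y|) ^ 2 * (b * y ^ (b - 1)) ≤
      400 * (Real.log b + 1) ^ 2 := by
  have hb0 : (0:ℝ) < b := by linarith
  set L : ℝ := Real.log b with hLdef
  have hL : 0 ≤ L := Real.log_nonneg hb
  set ε : ℝ := 1 / (2 * (L + 1)) with hεdef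
  have hε : 0 < ε := by positivity
  have hε2 : ε ≤ 1/2 := by
    rw [hεdef]
    rw [div_le_div_iff₀ (by positivity) (by norm_num)]
    linarith
  have hbe : b ^ ε ≤ 3 := by
    rw [Real.rpow_def_of_pos hb0]
    have h1 : Real.log b * ε ≤ 1 := by
      rw [hεdef]
      rw [mul_one_div, div_le_one (by positivity)]
      linarith
    calc Real.exp (Real.log b * ε) ≤ Real.exp 1 := Real.exp_le_exp.mpr h1
      _ ≤ 3 := by linarith [Real.exp_one_lt_d9.le]
  set C₀ : ℝ := 16 * (L + 1) ^ 2 with hC₀def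
  have hC₀pos : 0 < C₀ := by positivity
  have hC₀eq : 4 / ε ^ 2 = C₀ := by
    rw [hεdef, hC₀def]
    have : L + 1 ≠ 0 := by linarith
    field_simp
    ring
  set S : Set ℝ := Set.Icc (x - 1/b) (x + 1/b) with hSdef
  set N : ℝ → ℝ := fun y => b * C₀ * ((x - y) ^ (-ε) + (y - x) ^ (-ε)) with hNdef
  have hSle : x - 1/b ≤ x + 1/b := by
    have : (0:ℝ) < 1/b := by positivity
    linarith
  -- integrability of N on S
  have hrpow : ∀ a c : ℝ, IntervalIntegrable (fun u : ℝ => u ^ (-ε)) volume a c :=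
    fun a c => intervalIntegral.intervalIntegrable_rpow' (by linarith)
  have h1 : IntervalIntegrable (fun y : ℝ => (x - y) ^ (-ε)) volume (x - 1/b) (x + 1/b) := by
    have h := ((hrpow (-(1/b)) (1/b)).comp_sub_left x).symm
    have e1 : x - -(1/b) = x + 1/b := by ring
    rw [e1] at h; exact h
  have h2 : IntervalIntegrable (fun y : ℝ => (y - x) ^ (-ε)) volume (x - 1/b) (x + 1/b) := by
    have h := (hrpow (-(1/b)) (1/b)).comp_sub_right x
    have e1 : -(1/b) + x = x - 1/b := by ring
    have e2 : 1/b + x = x + 1/b := by ring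
    rw [e1, e2] at h; exact h
  have hNint : IntervalIntegrable N volume (x - 1/b) (x + 1/b) := by
    rw [hNdef]
    exact ((h1.add h2).const_mul (b * C₀))
  have hNS : IntegrableOn N S volume := by
    rw [hSdef, ← intervalIntegrable_iff_integrableOn_Icc_of_le hSle]
    exact hNint
  have hInd : Integrable (S.indicator N) volume :=
    hNS.integrable_indicator measurableSet_Icc
  have hNnonneg : ∀ y, 0 ≤ N y := by
    intro y
    apply mul_nonneg (by positivity)
    exact add_nonneg (rpow_neg_eps_nonneg hε hε2 _) (rpow_neg_eps_nonneg hε hε2 _)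
  have hIndnonneg : ∀ y, 0 ≤ S.indicator N y :=
    fun y => Set.indicator_nonneg (fun z _ => hNnonneg z) y
  -- G and its integrability on Icc 0 1
  set G : ℝ → ℝ := fun y => S.indicator N y + L ^ 2 * (b * y ^ (b - 1)) with hGdef
  have hGint : IntegrableOn G (Set.Icc 0 1) volume :=
    hInd.integrableOn.add ((density_integrableOn hb).const_mul (L ^ 2))
  -- pointwise bound
  have hpt : ∀ y ∈ Set.Icc (0:ℝ) 1,
      (Real.log |x - y|) ^ 2 * (b * y ^ (b - 1)) ≤ G y := by
    intro y hy
    obtain ⟨hy0, hy1⟩ := hy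
    obtain ⟨hx0, hx1⟩ := hx
    have habs1 : |x - y| ≤ 1 := abs_le.mpr ⟨by linarith, by linarith⟩
    have hd0 : 0 ≤ y ^ (b - 1) := Real.rpow_nonneg hy0 _
    have hd1 : y ^ (b - 1) ≤ 1 := Real.rpow_le_one hy0 hy1 (by linarith)
    have hdens0 : 0 ≤ b * y ^ (b - 1) := by positivity
    by_cases hmem : y ∈ S
    · rw [hGdef]
      simp only [Set.indicator_of_mem hmem]
      have hlog := logsq_le hε (abs_nonneg (x - y)) habs1
      rw [hC₀eq] at hlog
      have habsr := abs_rpow_le hε hε2 (x - y)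
      rw [neg_sub] at habsr
      have hrn : 0 ≤ |x - y| ^ (-ε) := Real.rpow_nonneg (abs_nonneg _) _
      have step1 : (Real.log |x - y|) ^ 2 * (b * y ^ (b - 1)) ≤
          (C₀ * |x - y| ^ (-ε)) * b := by
        calc (Real.log |x - y|) ^ 2 * (b * y ^ (b - 1)) ≤
            (C₀ * |x - y| ^ (-ε)) * (b * y ^ (b - 1)) :=
              mul_le_mul_of_nonneg_right hlog hdens0
          _ ≤ (C₀ * |x - y| ^ (-ε)) * (b * 1) := by
              apply mul_le_mul_of_nonneg_left _ (by positivity)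
              exact mul_le_mul_of_nonneg_left hd1 hb0.le
          _ = (C₀ * |x - y| ^ (-ε)) * b := by ring
      have step2 : (C₀ * |x - y| ^ (-ε)) * b ≤ N y := by
        have h := mul_le_mul_of_nonneg_left habsr hC₀pos.le
        have hNy : N y = b * C₀ * ((x - y) ^ (-ε) + (y - x) ^ (-ε)) := rfl
        rw [hNy]
        calc (C₀ * |x - y| ^ (-ε)) * b = b * (C₀ * |x - y| ^ (-ε)) := by ring
          _ ≤ b * (C₀ * ((x - y) ^ (-ε) + (y - x) ^ (-ε))) :=
              mul_le_mul_of_nonneg_left h hb0.le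
          _ = b * C₀ * ((x - y) ^ (-ε) + (y - x) ^ (-ε)) := by ring
      have hnn : 0 ≤ L ^ 2 * (b * y ^ (b - 1)) := by positivity
      linarith
    · rw [hGdef]
      simp only [Set.indicator_of_notMem hmem]
      have hfar : 1/b ≤ |x - y| := by
        rw [hSdef, Set.mem_Icc, not_and_or, not_le, not_le] at hmem
        rcases hmem with h | h
        · have : 1/b ≤ x - y := by linarith
          exact this.trans (le_abs_self _)
        · have : 1/b ≤ y - x := by linarith
          calc 1/b ≤ y - x := this
            _ ≤ |y - x| := le_abs_self _
            _ = |x - y| := abs_sub_comm y x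
      have hlogle : Real.log |x - y| ≤ 0 :=
        Real.log_nonpos (abs_nonneg _) habs1
      have hlogge : -L ≤ Real.log |x - y| := by
        have h := Real.log_le_log (by positivity : (0:ℝ) < 1/b) hfar
        rw [one_div, Real.log_inv] at h
        exact h
      have hsq : (Real.log |x - y|) ^ 2 ≤ L ^ 2 := by nlinarith
      have : (Real.log |x - y|) ^ 2 * (b * y ^ (b - 1)) ≤ L ^ 2 * (b * y ^ (b - 1)) :=
        mul_le_mul_of_nonneg_right hsq hdens0
      linarith
  -- monotonicity
  have hmono : ∫ y in Set.Icc (0:ℝ) 1, (Real.log |x - y|) ^ 2 * (b * y ^ (b - 1)) ≤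
      ∫ y in Set.Icc (0:ℝ) 1, G y := by
    apply integral_mono_of_nonneg
    · rw [Filter.EventuallyLE]
      refine (ae_restrict_iff' measurableSet_Icc).mpr (Filter.Eventually.of_forall fun y hy => ?_)
      obtain ⟨hy0, hy1⟩ := hy
      have : 0 ≤ y ^ (b - 1) := Real.rpow_nonneg hy0 _
      positivity
    · exact hGint
    · rw [Filter.EventuallyLE]
      exact (ae_restrict_iff' measurableSet_Icc).mpr (Filter.Eventually.of_forall hpt)
  -- compute integral of G
  have hGsplit : ∫ y in Set.Icc (0:ℝ) 1, G y =
      (∫ y in Set.Icc (0:ℝ) 1, S.indicator N y) +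
        ∫ y in Set.Icc (0:ℝ) 1, L ^ 2 * (b * y ^ (b - 1)) := by
    rw [hGdef]
    exact integral_add hInd.integrableOn ((density_integrableOn hb).const_mul (L ^ 2))
  have hIndbound : (∫ y in Set.Icc (0:ℝ) 1, S.indicator N y) ≤ 24 * C₀ := by
    calc (∫ y in Set.Icc (0:ℝ) 1, S.indicator N y) ≤ ∫ y, S.indicator N y :=
          setIntegral_le_integral hInd (Filter.Eventually.of_forall hIndnonneg)
      _ = ∫ y in S, N y := integral_indicator measurableSet_Icc
      _ = ∫ y in (x - 1/b)..(x + 1/b), N y := by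
          rw [hSdef, integral_Icc_eq_integral_Ioc,
            intervalIntegral.integral_of_le hSle]
      _ = b * C₀ * ∫ y in (x - 1/b)..(x + 1/b), ((x - y) ^ (-ε) + (y - x) ^ (-ε)) := by
          rw [hNdef, intervalIntegral.integral_const_mul]
      _ ≤ b * C₀ * (24 / b) := by
          apply mul_le_mul_of_nonneg_left (near_integral hb hε hε2 hbe x) (by positivity)
      _ = 24 * C₀ := by field_simp
  have hfarint : ∫ y in Set.Icc (0:ℝ) 1, L ^ 2 * (b * y ^ (b - 1)) = L ^ 2 := by
    rw [integral_const_mul, density_integral hb, mul_one]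
  have : ∫ y in Set.Icc (0:ℝ) 1, (Real.log |x - y|) ^ 2 * (b * y ^ (b - 1)) ≤
      24 * C₀ + L ^ 2 := by
    rw [hGsplit, hfarint] at hmono
    linarith
  rw [hC₀def] at this
  nlinarith

end Aux

section Main
open Real Set

/-- There is a constant `C > 0` such that for all `b ≥ 1`,
`∫_{[0,1]²} (log|x-y|)² b x^(b-1) b y^(b-1) dx dy ≤ C (log b + 1)⁴`. -/
theorem stmt_5 :
    ∃ C : ℝ, 0 < C ∧ ∀ b : ℝ, 1 ≤ b →
      ∫ x in Set.Icc (0:ℝ) 1, ∫ y in Set.Icc (0:ℝ) 1,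
          (Real.log |x - y|) ^ 2 * (b * x ^ (b - 1)) * (b * y ^ (b - 1)) ≤
        C * (Real.log b + 1) ^ 4 := by
  refine ⟨400, by norm_num, fun b hb => ?_⟩
  have hb0 : (0:ℝ) < b := by linarith
  set L : ℝ := Real.log b with hLdef
  have hL : 0 ≤ L := Real.log_nonneg hb
  have hrw : ∀ x : ℝ,
      (∫ y in Set.Icc (0:ℝ) 1,
          (Real.log |x - y|) ^ 2 * (b * x ^ (b - 1)) * (b * y ^ (b - 1))) =
        (b * x ^ (b - 1)) *
          ∫ y in Set.Icc (0:ℝ) 1, (Real.log |x - y|) ^ 2 * (b * y ^ (b - 1)) := by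
    intro x
    rw [← integral_const_mul]
    congr 1
    funext y
    ring
  have hdom : IntegrableOn (fun x : ℝ => 400 * (L + 1) ^ 2 * (b * x ^ (b - 1)))
      (Set.Icc 0 1) volume :=
    (density_integrableOn hb).const_mul _
  have hmono : (∫ x in Set.Icc (0:ℝ) 1, ∫ y in Set.Icc (0:ℝ) 1,
        (Real.log |x - y|) ^ 2 * (b * x ^ (b - 1)) * (b * y ^ (b - 1))) ≤
      ∫ x in Set.Icc (0:ℝ) 1, 400 * (L + 1) ^ 2 * (b * x ^ (b - 1)) := by
    apply integral_mono_of_nonneg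
    · rw [Filter.EventuallyLE]
      refine (ae_restrict_iff' measurableSet_Icc).mpr (Filter.Eventually.of_forall fun x hx => ?_)
      simp only [Pi.zero_apply]
      apply setIntegral_nonneg measurableSet_Icc
      intro y hy
      have h1 : 0 ≤ x ^ (b - 1) := Real.rpow_nonneg hx.1 _
      have h2 : 0 ≤ y ^ (b - 1) := Real.rpow_nonneg hy.1 _
      positivity
    · exact hdom
    · rw [Filter.EventuallyLE]
      refine (ae_restrict_iff' measurableSet_Icc).mpr (Filter.Eventually.of_forall fun x hx => ?_)
      rw [hrw x]
      have h1 : 0 ≤ b * x ^ (b - 1) := by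
        have := Real.rpow_nonneg hx.1 (b - 1)
        positivity
      calc (b * x ^ (b - 1)) *
            ∫ y in Set.Icc (0:ℝ) 1, (Real.log |x - y|) ^ 2 * (b * y ^ (b - 1)) ≤
          (b * x ^ (b - 1)) * (400 * (L + 1) ^ 2) :=
            mul_le_mul_of_nonneg_left (inner_bound hb hx) h1
        _ = 400 * (L + 1) ^ 2 * (b * x ^ (b - 1)) := by ring
  have hval : ∫ x in Set.Icc (0:ℝ) 1, 400 * (L + 1) ^ 2 * (b * x ^ (b - 1)) =
      400 * (L + 1) ^ 2 := by
    rw [integral_const_mul, density_integral hb, mul_one]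
  rw [hval] at hmono
  have hfin : 400 * (L + 1) ^ 2 ≤ 400 * (L + 1) ^ 4 := by
    have h1 : (1:ℝ) ≤ L + 1 := by linarith
    have := pow_le_pow_right₀ h1 (by norm_num : 2 ≤ 4)
    linarith
  linarith

end Main
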